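/- Let G be a group acting faithfully on a set S, let H be a group satisfying every group identity of G, and let r ≥ 1. Then every 2-sorted identity [w]y ≈ [w′]y that holds in the 2-sorted algebra (G, S; α) holds in L(H, r) = (H, Fin r × H; m), where m(h, (i, x)) = (i, h·x). Explicitly: for every k and all words w, w′ (finite lists of variable indices from Fin k), if for all g : Fin k → G and all t ∈ S one has g(i₁)•(g(i₂)•(⋯•(g(i_m)•t)⋯)) computed along w equal to the corresponding value along w′, then for all h : Fin k → H, all j ∈ Fin r and all x ∈ H, the analogous folded products h(i₁)·(h(i₂)·(⋯·(h(i_m)·x)⋯)) along w and w′ are equal. -/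
import Mathlib


/-- Evaluation of the 2-sorted term `[w]y` in a 2-sorted algebra `(A₁, A₂; s)`:
for `w = x_{i₁} ⋯ x_{i_m}`, an assignment `g` of sort-1 variables and a value
`y` of sort 2, it computes `s(g i₁, s(g i₂, …, s(g i_m, y)…))`. -/
def evalWord {ι A₁ A₂ : Type*} (s : A₁ → A₂ → A₂) (g : ι → A₁)
    (w : List ι) (y : A₂) : A₂ :=
  w.foldr (fun i acc => s (g i) acc) y

lemma evalWord_smul {ι G S : Type*} [Group G] [MulAction G S] (g : ι → G)
    (w : List ι) (t : S) :
    evalWord (fun (a : G) (b : S) => a • b) g w t = (w.map g).prod • t := by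
  induction w with
  | nil => simp [evalWord]
  | cons a l ih => simp [evalWord, List.foldr] at ih ⊢; rw [ih, mul_smul]

lemma evalWord_mul {ι H : Type*} [Group H] (h : ι → H) (w : List ι) (x : H) :
    evalWord (fun (a : H) (b : H) => a * b) h w x = (w.map h).prod * x := by
  induction w with
  | nil => simp [evalWord]
  | cons a l ih => simp [evalWord, List.foldr] at ih ⊢; rw [ih, mul_assoc]

lemma evalWord_prod {ι H J : Type*} [Group H] (h : ι → H) (w : List ι)
    (j : J) (x : H) :
    evalWord (fun (a : H) (b : J × H) => (b.1, a * b.2)) h w (j, x)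
      = (j, (w.map h).prod * x) := by
  induction w with
  | nil => simp [evalWord]
  | cons a l ih => simp [evalWord, List.foldr] at ih ⊢; simp [ih, mul_assoc]

lemma lift_listProd {ι H : Type*} [Group H] (h : ι → H) (w : List ι) :
    FreeGroup.lift h ((w.map FreeGroup.of).prod) = (w.map h).prod := by
  induction w with
  | nil => simp
  | cons a l ih => simp [ih]

theorem stmt_11 (G : Type*) [Group G] (S : Type*) [MulAction G S]
    [FaithfulSMul G S] (H : Type*) [Group H]
    (hH : ∀ (k : ℕ) (u : FreeGroup (Fin k)),
      (∀ g : Fin k → G, FreeGroup.lift g u = 1) →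
      ∀ h : Fin k → H, FreeGroup.lift h u = 1)
    (r : ℕ) (hr : 1 ≤ r) :
    ∀ (k : ℕ) (w w' : List (Fin k)),
      (∀ (g : Fin k → G) (t : S),
        evalWord (fun (a : G) (b : S) => a • b) g w t =
        evalWord (fun (a : G) (b : S) => a • b) g w' t) →
      ∀ (h : Fin k → H) (j : Fin r) (x : H),
        evalWord (fun (a : H) (b : Fin r × H) => (b.1, a * b.2)) h w (j, x) =
        evalWord (fun (a : H) (b : Fin r × H) => (b.1, a * b.2)) h w' (j, x) := by
  intro k w w' hid h j x
  set u : FreeGroup (Fin k) :=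
    (w.map FreeGroup.of).prod * ((w'.map FreeGroup.of).prod)⁻¹ with hu
  have hG : ∀ g : Fin k → G, FreeGroup.lift g u = 1 := by
    intro g
    have hprod : (w.map g).prod = (w'.map g).prod := by
      apply FaithfulSMul.eq_of_smul_eq_smul (α := S)
      intro t
      have := hid g t
      rwa [evalWord_smul, evalWord_smul] at this
    simp [hu, lift_listProd, hprod]
  have hHu := hH k u hG h
  have hprodH : (w.map h).prod = (w'.map h).prod := by
    simp [hu, lift_listProd] at hHu
    rwa [mul_inv_eq_one] at hHu
  rw [evalWord_prod, evalWord_prod, hprodH]
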